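/- Let u ∈ ℝⁿ, λ > 0, and let s̃ ≥ 1 be an integer such that 4 ρ₊(A, s̃) ‖Au‖₂² / λ² < s̃. Then the number of coordinates j with |(AᵀAu)_j| ≥ λ/2 is at most 4 ρ₊(A, s̃) ‖Au‖₂² / λ². -/
import Mathlib


open scoped BigOperators
open Matrix

noncomputable section

namespace PGH

/-- Euclidean dot product on `Fin n → ℝ`. -/
def dot {n : ℕ} (x y : Fin n → ℝ) : ℝ := ∑ i, x i * y i

/-- Squared Euclidean norm. -/
def sqnorm {n : ℕ} (x : Fin n → ℝ) : ℝ := ∑ i, (x i) ^ 2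

/-- Euclidean (ℓ₂) norm. -/
noncomputable def l2 {n : ℕ} (x : Fin n → ℝ) : ℝ := Real.sqrt (sqnorm x)

/-- ℓ₁ norm. -/
def l1 {n : ℕ} (x : Fin n → ℝ) : ℝ := ∑ i, |x i|

/-- ℓ∞ norm (maximum absolute coordinate). -/
noncomputable def linf {n : ℕ} (x : Fin n → ℝ) : ℝ := ⨆ i, |x i|

/-- Support of a vector. -/
def supp {n : ℕ} (x : Fin n → ℝ) : Finset (Fin n) := Finset.univ.filter (fun i => x i ≠ 0)

/-- Number of nonzero coordinates. -/
def l0 {n : ℕ} (x : Fin n → ℝ) : ℕ := (supp x).card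

/-- Number of nonzero coordinates within the index set `S`
(i.e. `‖x_S‖₀` for the restriction of `x` to `S`). -/
def l0on {n : ℕ} (S : Finset (Fin n)) (x : Fin n → ℝ) : ℕ :=
  (S.filter (fun i => x i ≠ 0)).card

/-- ℓ₁ norm of the restriction of `x` to the index set `S`. -/
def l1on {n : ℕ} (S : Finset (Fin n)) (x : Fin n → ℝ) : ℝ := ∑ i ∈ S, |x i|

/-- Gradient of `f(x) = (1/2)‖Ax - b‖₂²`, namely `Aᵀ(Ax - b)`. -/
def grad {m n : ℕ} (A : Matrix (Fin m) (Fin n) ℝ) (b : Fin m → ℝ) (x : Fin n → ℝ) :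
    Fin n → ℝ :=
  Aᵀ.mulVec (A.mulVec x - b)

/-- Least-squares objective `f(x) = (1/2)‖Ax - b‖₂²`. -/
def fls {m n : ℕ} (A : Matrix (Fin m) (Fin n) ℝ) (b : Fin m → ℝ) (x : Fin n → ℝ) : ℝ :=
  sqnorm (A.mulVec x - b) / 2

/-- ℓ₁-regularized least-squares objective `φ_λ(x) = f(x) + λ‖x‖₁`. -/
def phi {m n : ℕ} (A : Matrix (Fin m) (Fin n) ℝ) (b : Fin m → ℝ) (lam : ℝ)
    (x : Fin n → ℝ) : ℝ :=
  fls A b x + lam * l1 x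

/-- Restricted maximal eigenvalue `ρ₊(A, s)`. -/
noncomputable def rhoPlus {m n : ℕ} (A : Matrix (Fin m) (Fin n) ℝ) (s : ℕ) : ℝ :=
  sSup {r | ∃ x : Fin n → ℝ, x ≠ 0 ∧ l0 x ≤ s ∧ r = sqnorm (A.mulVec x) / sqnorm x}

/-- Restricted minimal eigenvalue `ρ₋(A, s)`. -/
noncomputable def rhoMinus {m n : ℕ} (A : Matrix (Fin m) (Fin n) ℝ) (s : ℕ) : ℝ :=
  sInf {r | ∃ x : Fin n → ℝ, x ≠ 0 ∧ l0 x ≤ s ∧ r = sqnorm (A.mulVec x) / sqnorm x}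

/-- `ξ` is a subgradient of the ℓ₁ norm at `x`. -/
def IsSubgrad {n : ℕ} (x ξ : Fin n → ℝ) : Prop :=
  ∀ i, (x i ≠ 0 → ξ i = Real.sign (x i)) ∧ (x i = 0 → |ξ i| ≤ 1)

/-- Optimality residue `ω_λ(x) = min_{ξ ∈ ∂‖x‖₁} ‖Aᵀ(Ax−b) + λξ‖_∞`. -/
noncomputable def omega {m n : ℕ} (A : Matrix (Fin m) (Fin n) ℝ) (b : Fin m → ℝ)
    (lam : ℝ) (x : Fin n → ℝ) : ℝ :=
  sInf {r | ∃ ξ : Fin n → ℝ, IsSubgrad x ξ ∧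
    r = linf (fun i => grad A b x i + lam * ξ i)}

/-- The local model `ψ_{λ,L}(y; x)`. -/
def psi {m n : ℕ} (A : Matrix (Fin m) (Fin n) ℝ) (b : Fin m → ℝ) (lam L : ℝ)
    (y x : Fin n → ℝ) : ℝ :=
  fls A b y + dot (grad A b y) (x - y) + L / 2 * sqnorm (x - y) + lam * l1 x

/-- The noise-domination condition
`λ ≥ max{4, (γ+1)/((1−δ')γ−(1+δ'))} ⬝ ‖Aᵀz‖_∞`. -/
def noiseCond {m n : ℕ} (A : Matrix (Fin m) (Fin n) ℝ) (z : Fin m → ℝ)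
    (dp gam lam : ℝ) : Prop :=
  lam ≥ max 4 ((gam + 1) / ((1 - dp) * gam - (1 + dp))) * linf (Aᵀ.mulVec z)

lemma sqnorm_nonneg {n : ℕ} (x : Fin n → ℝ) : 0 ≤ sqnorm x :=
  Finset.sum_nonneg fun i _ => sq_nonneg _

lemma rho_set_bddAbove {m n : ℕ} (A : Matrix (Fin m) (Fin n) ℝ) (s : ℕ) :
    BddAbove {r | ∃ x : Fin n → ℝ, x ≠ 0 ∧ l0 x ≤ s ∧
      r = sqnorm (A.mulVec x) / sqnorm x} := by
  refine ⟨∑ i, ∑ j, (A i j) ^ 2, ?_⟩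
  rintro r ⟨x, hx, -, rfl⟩
  have hxpos : 0 < sqnorm x := by
    rcases (sqnorm_nonneg x).lt_or_eq with h | h
    · exact h
    · exfalso; apply hx; funext i
      have := (Finset.sum_eq_zero_iff_of_nonneg
        (fun i _ => sq_nonneg (x i))).mp h.symm i (Finset.mem_univ i)
      exact pow_eq_zero_iff (n := 2) (by norm_num) |>.mp this
  rw [div_le_iff₀ hxpos]
  have hA : sqnorm (A.mulVec x) ≤ (∑ i, ∑ j, (A i j) ^ 2) * sqnorm x := by
    unfold sqnorm Matrix.mulVec dotProduct
    rw [Finset.sum_mul]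
    refine Finset.sum_le_sum fun i _ => ?_
    exact Finset.sum_mul_sq_le_sq_mul_sq Finset.univ (fun j => A i j) x
  exact hA

lemma rhoPlus_nonneg {m n : ℕ} (A : Matrix (Fin m) (Fin n) ℝ) (s : ℕ) :
    0 ≤ rhoPlus A s := by
  unfold rhoPlus
  rcases Set.eq_empty_or_nonempty
    {r | ∃ x : Fin n → ℝ, x ≠ 0 ∧ l0 x ≤ s ∧ r = sqnorm (A.mulVec x) / sqnorm x}
    with h | h
  · rw [h, Real.sSup_empty]
  · obtain ⟨r, hr⟩ := h
    refine le_trans ?_ (le_csSup (rho_set_bddAbove A s) hr)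
    obtain ⟨x, -, -, rfl⟩ := hr
    exact div_nonneg (sqnorm_nonneg _) (sqnorm_nonneg _)

lemma le_rhoPlus {m n : ℕ} (A : Matrix (Fin m) (Fin n) ℝ) (s : ℕ)
    (x : Fin n → ℝ) (hx : x ≠ 0) (hl0 : l0 x ≤ s) :
    sqnorm (A.mulVec x) ≤ rhoPlus A s * sqnorm x := by
  have hxpos : 0 < sqnorm x := by
    rcases (sqnorm_nonneg x).lt_or_eq with h | h
    · exact h
    · exfalso; apply hx; funext i
      have := (Finset.sum_eq_zero_iff_of_nonneg
        (fun i _ => sq_nonneg (x i))).mp h.symm i (Finset.mem_univ i)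
      exact pow_eq_zero_iff (n := 2) (by norm_num) |>.mp this
  have hmem : sqnorm (A.mulVec x) / sqnorm x ∈
      {r | ∃ y : Fin n → ℝ, y ≠ 0 ∧ l0 y ≤ s ∧ r = sqnorm (A.mulVec y) / sqnorm y} :=
    ⟨x, hx, hl0, rfl⟩
  have := le_csSup (rho_set_bddAbove A s) hmem
  rw [div_le_iff₀ hxpos] at this
  exact this

lemma sign_mul_self {a : ℝ} (ha : a ≠ 0) : Real.sign a * a = |a| := by
  rcases ha.lt_or_gt with h | h
  · rw [Real.sign_of_neg h, abs_of_neg h]; ring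
  · rw [Real.sign_of_pos h, abs_of_pos h]; ring

lemma sign_sq {a : ℝ} (ha : a ≠ 0) : (Real.sign a) ^ 2 = 1 := by
  rcases ha.lt_or_gt with h | h
  · rw [Real.sign_of_neg h]; norm_num
  · rw [Real.sign_of_pos h]; norm_num

/-- `⟨x, Aᵀ w⟩ = ⟨A x, w⟩`. -/
lemma dot_transpose {m n : ℕ} (A : Matrix (Fin m) (Fin n) ℝ)
    (x : Fin n → ℝ) (w : Fin m → ℝ) :
    dot x (Aᵀ.mulVec w) = dot (A.mulVec x) w := by
  unfold dot Matrix.mulVec dotProduct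
  simp only [Matrix.transpose_apply, Finset.mul_sum, Finset.sum_mul]
  rw [Finset.sum_comm]
  congr 1; funext i; congr 1; funext j; ring

theorem stmt13 {m n : ℕ} (A : Matrix (Fin m) (Fin n) ℝ)
    (u : Fin n → ℝ) (lam : ℝ) (hlam : 0 < lam) (st : ℕ) (hst : 1 ≤ st)
    (hsmall : 4 * rhoPlus A st * sqnorm (A.mulVec u) / lam ^ 2 < (st : ℝ)) :
    ((Finset.univ.filter (fun j : Fin n => lam / 2 ≤ |Aᵀ.mulVec (A.mulVec u) j|)).card : ℝ)
      ≤ 4 * rhoPlus A st * sqnorm (A.mulVec u) / lam ^ 2 := by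
  set v : Fin n → ℝ := Aᵀ.mulVec (A.mulVec u) with hv
  set T : Finset (Fin n) := Finset.univ.filter (fun j : Fin n => lam / 2 ≤ |v j|) with hT
  set K : ℝ := 4 * rhoPlus A st * sqnorm (A.mulVec u) / lam ^ 2 with hK
  have hK0 : 0 ≤ K := by
    have h1 := rhoPlus_nonneg A st
    have h2 := sqnorm_nonneg (A.mulVec u)
    positivity
  -- Main claim: any subset S of T with card ≤ st satisfies (S.card : ℝ) ≤ K.
  have key : ∀ S : Finset (Fin n), S ⊆ T → S.card ≤ st → (S.card : ℝ) ≤ K := by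
    intro S hST hScard
    rcases S.eq_empty_or_nonempty with rfl | hSne
    · simpa using hK0
    have hvS : ∀ j ∈ S, lam / 2 ≤ |v j| ∧ v j ≠ 0 := by
      intro j hj
      have hjT := hST hj
      have h1 : lam / 2 ≤ |v j| := by
        simpa [hT] using (Finset.mem_filter.mp hjT).2
      refine ⟨h1, ?_⟩
      intro h0
      rw [h0, abs_zero] at h1
      nlinarith
    set x : Fin n → ℝ := fun j => if j ∈ S then Real.sign (v j) else 0 with hx
    obtain ⟨j0, hj0⟩ := hSne
    have hxne : x ≠ 0 := by
      intro h0
      have : x j0 = 0 := by rw [h0]; rfl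
      rw [hx] at this
      simp only [if_pos hj0] at this
      exact (hvS j0 hj0).2 (Real.sign_eq_zero_iff.mp this)
    have hl0 : l0 x ≤ st := by
      refine le_trans (Finset.card_le_card ?_) hScard
      intro j hj
      simp only [supp, Finset.mem_filter] at hj
      by_contra hjS
      exact hj.2 (by rw [hx]; simp [hjS])
    -- sqnorm x = card S
    have hsq : sqnorm x = (S.card : ℝ) := by
      unfold sqnorm
      rw [← Finset.sum_subset (Finset.subset_univ S)
        (by intro j _ hjS; rw [hx]; simp [hjS])]
      have h1 : ∀ j ∈ S, x j ^ 2 = 1 := fun j hj => by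
        simp only [hx, if_pos hj]; exact sign_sq (hvS j hj).2
      rw [Finset.sum_congr rfl h1, Finset.sum_const, nsmul_eq_mul, mul_one]
    -- dot x v ≥ card S * (lam/2)
    have hdot_lb : (S.card : ℝ) * (lam / 2) ≤ dot x v := by
      unfold dot
      rw [← Finset.sum_subset (Finset.subset_univ S)
        (by intro j _ hjS; rw [hx]; simp [hjS])]
      calc (S.card : ℝ) * (lam / 2) = ∑ _j ∈ S, lam / 2 := by
            rw [Finset.sum_const, nsmul_eq_mul]
        _ ≤ ∑ j ∈ S, x j * v j := by
            refine Finset.sum_le_sum fun j hj => ?_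
            rw [hx]; simp only [if_pos hj]
            rw [sign_mul_self (hvS j hj).2]
            exact (hvS j hj).1
    -- dot x v = ⟨Ax, Au⟩
    have hdot_eq : dot x v = dot (A.mulVec x) (A.mulVec u) := dot_transpose A x _
    -- Cauchy-Schwarz
    have hCS : (dot (A.mulVec x) (A.mulVec u)) ^ 2
        ≤ sqnorm (A.mulVec x) * sqnorm (A.mulVec u) :=
      Finset.sum_mul_sq_le_sq_mul_sq Finset.univ (A.mulVec x) (A.mulVec u)
    have hrho : sqnorm (A.mulVec x) ≤ rhoPlus A st * sqnorm x :=
      le_rhoPlus A st x hxne hl0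
    -- combine
    have hcpos : (0 : ℝ) < S.card := by
      have : 0 < S.card := Finset.card_pos.mpr ⟨j0, hj0⟩
      exact_mod_cast this
    have hAu : 0 ≤ sqnorm (A.mulVec u) := sqnorm_nonneg _
    have h1 : ((S.card : ℝ) * (lam / 2)) ^ 2
        ≤ rhoPlus A st * (S.card : ℝ) * sqnorm (A.mulVec u) := by
      have hlb : 0 ≤ (S.card : ℝ) * (lam / 2) := by positivity
      calc ((S.card : ℝ) * (lam / 2)) ^ 2 ≤ (dot x v) ^ 2 := by
            exact pow_le_pow_left₀ hlb hdot_lb 2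
        _ ≤ sqnorm (A.mulVec x) * sqnorm (A.mulVec u) := by
            rw [hdot_eq]; exact hCS
        _ ≤ rhoPlus A st * sqnorm x * sqnorm (A.mulVec u) :=
            mul_le_mul_of_nonneg_right hrho hAu
        _ = rhoPlus A st * (S.card : ℝ) * sqnorm (A.mulVec u) := by rw [hsq]
    rw [hK, le_div_iff₀ (by positivity : (0:ℝ) < lam ^ 2)]
    nlinarith [h1, hcpos]
  -- Now the case analysis.
  by_cases hcard : T.card ≤ st
  · exact key T (le_refl T) hcard
  · exfalso
    push_neg at hcard
    obtain ⟨S, hST, hScard⟩ := Finset.exists_subset_card_eq (le_of_lt hcard)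
    have := key S hST (le_of_eq hScard)
    rw [hScard] at this
    exact absurd (lt_of_le_of_lt this hsmall) (lt_irrefl _)

end PGH
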